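/- Let δ ∈ {0,1}^J, let x ∈ ℝ^{J^<} satisfy the inequalities (x1–x4), and let e, t ∈ ℝ^J satisfy, for all j ∈ J: e_j ≥ 0, e_j ≤ δ_j (p(J) − p_j), t_j ≥ 0, t_j ≤ (1−δ_j) p(J), together with the inequalities (S2): for every S ⊆ J, ∑_{i∈S} p_i t_i ≥ ∑_{(i,j)∈S^<} p_i p_j (2 − (δ_i + δ_j) − x_{i,j})/2 + ∑_{i∈S} p_i² (1 − δ_i). Define C_j = d − e_j + t_j for all j. Then E(δ) = E(C) and T(δ) = T(C). -/
import Mathlib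


/-- Sum over the ordered pairs `S^< = {(i,j) ∈ S² : i < j}`. -/
def pairSum {J : Type*} [LinearOrder J] (S : Finset J) (f : J → J → ℝ) : ℝ :=
  ∑ i ∈ S, ∑ j ∈ S.filter (fun j => i < j), f i j

/-- under the consistency inequalities (e0–t1), the linearization
inequalities (x1–x4), and the inequalities (S2), the partition given by `δ` coincides
with the early/tardy partition of the schedule `C_j = d − e_j + t_j`:
`E(δ) = E(C)` and `T(δ) = T(C)`. -/
theorem stmt_12 {J : Type*} [Fintype J] [LinearOrder J]
    (p : J → ℝ) (hp : ∀ j, 0 < p j) (d : ℝ)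
    (δ : J → ℝ) (hδ : ∀ j, δ j = 0 ∨ δ j = 1)
    (x : J → J → ℝ)
    (hx : ∀ i j : J, i < j →
      x i j ≥ δ i - δ j ∧ x i j ≥ δ j - δ i ∧
      x i j ≤ δ i + δ j ∧ x i j ≤ 2 - (δ i + δ j))
    (e t : J → ℝ)
    (he0 : ∀ j, 0 ≤ e j) (he1 : ∀ j, e j ≤ δ j * ((∑ k, p k) - p j))
    (ht0 : ∀ j, 0 ≤ t j) (ht1 : ∀ j, t j ≤ (1 - δ j) * (∑ k, p k))
    (hS2 : ∀ S : Finset J,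
      ∑ i ∈ S, p i * t i ≥
        pairSum S (fun i j => p i * p j * (2 - (δ i + δ j) - x i j) / 2)
          + ∑ i ∈ S, (p i) ^ 2 * (1 - δ i)) :
    (∀ j, δ j = 1 ↔ d - e j + t j ≤ d) ∧
    (∀ j, δ j = 0 ↔ d < d - e j + t j) := by
  -- Main claim: δ j = 1 → C j ≤ d, and δ j = 0 → C j > d.
  have key : ∀ j, (δ j = 1 → d - e j + t j ≤ d) ∧ (δ j = 0 → d < d - e j + t j) := by
    intro j
    constructor
    · intro h1
      have ht : t j ≤ 0 := by
        have := ht1 j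
        rw [h1] at this
        simpa using this
      have := he0 j
      linarith
    · intro h0
      have hej : e j ≤ 0 := by
        have := he1 j
        rw [h0] at this
        simpa using this
      have hej0 : e j = 0 := le_antisymm hej (he0 j)
      have hs := hS2 {j}
      have hpair : pairSum {j} (fun i k => p i * p k * (2 - (δ i + δ k) - x i k) / 2) = 0 := by
        simp [pairSum, Finset.filter_singleton]
      rw [hpair] at hs
      simp only [Finset.sum_singleton, h0] at hs
      have hpj := hp j
      have htj : p j ≤ t j := by
        nlinarith [hs]
      linarith
  constructor
  · intro j
    constructor
    · exact (key j).1
    · intro hC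
      rcases hδ j with h0 | h1
      · exact absurd hC (not_le.mpr ((key j).2 h0))
      · exact h1
  · intro j
    constructor
    · exact (key j).2
    · intro hC
      rcases hδ j with h0 | h1
      · exact h0
      · exact absurd ((key j).1 h1) (not_le.mpr hC)
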